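/- Let s ∈ ℕ and let {K₀, K₁, …, K_s} be a family of convex cones in ℝᵈ with a common vertex a. The family is separable if and only if there exist vectors λ_i ∈ K_i° for i = 0, …, s, not all zero, satisfying λ₀ + λ₁ + ⋯ + λ_s = 0. -/

import Mathlib

open scoped RealInnerProductSpace
open Asymptotics Topology

noncomputable section

abbrev Euc (d : ℕ) : Type := EuclideanSpace ℝ (Fin d)

/-- `K` is a convex cone with vertex `a`. -/
def IsConvexCone {E : Type*} [NormedAddCommGroup E] [InnerProductSpace ℝ E]
    (a : E) (K : Set E) : Prop :=
  a ∈ K ∧ (∀ x ∈ K, ∀ α : ℝ, 0 ≤ α → a + α • (x - a) ∈ K) ∧ Convex ℝ K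

/-- The polar (dual) cone of a cone `K` with vertex `a`. -/
def polarCone {E : Type*} [NormedAddCommGroup E] [InnerProductSpace ℝ E]
    (a : E) (K : Set E) : Set E :=
  {y | ∀ x ∈ K, ⟪y, x - a⟫ ≤ 0}

/-- `Q` is a tent of `Ω` at `a`. -/
def IsTent {E : Type*} [NormedAddCommGroup E] [InnerProductSpace ℝ E]
    (Ω : Set E) (a : E) (Q : Set E) : Prop :=
  IsConvexCone a Q ∧
  ∃ ψ : E → E, (fun x => ψ x - x) =o[𝓝 a] (fun x => x - a) ∧
    ∃ ε : ℝ, 0 < ε ∧ ∀ x ∈ Q, ‖x - a‖ < ε → ψ x ∈ Ω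

/-- `Q` is a local tent of `Ω` at `a`. -/
def IsLocalTent {E : Type*} [NormedAddCommGroup E] [InnerProductSpace ℝ E]
    (Ω : Set E) (a : E) (Q : Set E) : Prop :=
  IsConvexCone a Q ∧
  ∀ x ∈ intrinsicInterior ℝ Q, ∃ Q' : Set E, Q' ⊆ Q ∧ IsTent Ω a Q' ∧
    x ∈ intrinsicInterior ℝ Q' ∧ affineSpan ℝ Q' = affineSpan ℝ Q

/-- A family of convex cones with common vertex `a` is separable. -/
def SeparableFam {E : Type*} [NormedAddCommGroup E] [InnerProductSpace ℝ E]
    {ι : Type*} (a : E) (K : ι → Set E) : Prop :=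
  ∃ (i : ι) (c : E), c ≠ 0 ∧ (∀ x ∈ K i, ⟪c, x - a⟫ ≤ 0) ∧
    ∀ x : E, (∀ j, j ≠ i → x ∈ K j) → 0 ≤ ⟪c, x - a⟫

/-- The "open half-space with vertex added" is a convex cone with vertex `a`. -/
theorem halfspace_cone {E : Type*} [NormedAddCommGroup E] [InnerProductSpace ℝ E]
    (a c : E) : IsConvexCone a (insert a {x : E | ⟪c, x - a⟫ < 0}) := by
  have hmem : ∀ z : E, (⟪c, z - a⟫ < 0 ∨ z = a) →
      z ∈ insert a {x : E | ⟪c, x - a⟫ < 0} := by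
    intro z hz
    rcases hz with h | h
    · exact Set.mem_insert_of_mem _ h
    · rw [h]; exact Set.mem_insert _ _
  refine ⟨Set.mem_insert _ _, ?_, ?_⟩
  · intro x hx α hα
    rcases Set.mem_insert_iff.mp hx with h | h
    · apply hmem; right; rw [h]; simp
    · rcases eq_or_lt_of_le hα with h0 | hα'
      · apply hmem; right; rw [← h0]; simp
      · apply hmem; left
        rw [add_sub_cancel_left, real_inner_smul_right]
        exact mul_neg_of_pos_of_neg hα' h
  · intro x hx y hy α β hα hβ hαβ
    have hz : α • x + β • y - a = α • (x - a) + β • (y - a) := by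
      rw [show β = 1 - α by linarith]; module
    have hval : ⟪c, α • x + β • y - a⟫ = α * ⟪c, x - a⟫ + β * ⟪c, y - a⟫ := by
      rw [hz, inner_add_right, real_inner_smul_right, real_inner_smul_right]
    rcases Set.mem_insert_iff.mp hx with h1 | h1 <;>
      rcases Set.mem_insert_iff.mp hy with h2 | h2
    · apply hmem; right
      rw [h1, h2, show α • a + β • a = a by
        rw [show β = 1 - α by linarith]; module]
    · rcases eq_or_lt_of_le hβ with h0 | hβ'
      · apply hmem; right
        rw [h1, show α = (1:ℝ) by linarith, ← h0]; simp
      · apply hmem; left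
        rw [hval, h1]
        simp only [Set.mem_setOf_eq] at h2
        simp only [sub_self, inner_zero_right, mul_zero, zero_add]
        exact mul_neg_of_pos_of_neg hβ' h2
    · rcases eq_or_lt_of_le hα with h0 | hα'
      · apply hmem; right
        rw [h2, show β = (1:ℝ) by linarith, ← h0]; simp
      · apply hmem; left
        rw [hval, h2]
        simp only [Set.mem_setOf_eq] at h1
        simp only [sub_self, inner_zero_right, mul_zero, add_zero]
        exact mul_neg_of_pos_of_neg hα' h1
    · apply hmem; left
      rw [hval]
      simp only [Set.mem_setOf_eq] at h1 h2
      rcases eq_or_lt_of_le hα with h0 | hα'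
      · have hβ1 : β = 1 := by linarith
        rw [← h0, hβ1]; simpa using h2
      · nlinarith [mul_nonpos_of_nonneg_of_nonpos hβ h2.le]

/-- Any element of the polar cone of the half-space cone is a nonnegative
multiple of `c`. -/
theorem polar_halfspace {E : Type*} [NormedAddCommGroup E] [InnerProductSpace ℝ E]
    (a c : E) (hc : c ≠ 0) (μ : E)
    (hμ : μ ∈ polarCone a (insert a {x : E | ⟪c, x - a⟫ < 0})) :
    ∃ r : ℝ, 0 ≤ r ∧ μ = r • c := by
  have hv : ∀ v : E, ⟪c, v⟫ < 0 → ⟪μ, v⟫ ≤ 0 := by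
    intro v hvlt
    have := hμ (a + v) (Set.mem_insert_of_mem _ (by simpa using hvlt))
    simpa using this
  have hc2 : (0:ℝ) < ⟪c, c⟫ := by
    rcases eq_or_lt_of_le (real_inner_self_nonneg (x := c)) with h | h
    · exact absurd ((inner_self_eq_zero (𝕜 := ℝ)).mp h.symm) hc
    · exact h
  set r := ⟪c, μ⟫ / ⟪c, c⟫ with hr
  set w := μ - r • c with hw
  have hcw : ⟪c, w⟫ = 0 := by
    rw [hw, inner_sub_right, real_inner_smul_right, hr]
    field_simp
    ring
  have hμw : ⟪μ, w⟫ = ⟪w, w⟫ := by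
    have hμeq : μ = w + r • c := by rw [hw]; abel
    rw [hμeq, inner_add_left, real_inner_smul_left, hcw]
    ring
  have hww : ∀ ε : ℝ, 0 < ε → ⟪w, w⟫ ≤ ε * ⟪μ, c⟫ := by
    intro ε hε
    have h1 : ⟪c, w - ε • c⟫ < 0 := by
      rw [inner_sub_right, real_inner_smul_right, hcw]
      nlinarith
    have h2 := hv _ h1
    rw [inner_sub_right, real_inner_smul_right, hμw] at h2
    linarith
  have hw0 : w = 0 := by
    rw [← (inner_self_eq_zero (𝕜 := ℝ))]
    by_contra hne
    have hpos : 0 < ⟪w, w⟫ :=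
      lt_of_le_of_ne real_inner_self_nonneg (Ne.symm hne)
    rcases le_or_gt ⟪μ, c⟫ 0 with h | h
    · have := hww 1 one_pos
      nlinarith
    · have h3 := hww (⟪w, w⟫ / (2 * ⟪μ, c⟫)) (by positivity)
      have h4 : ⟪w, w⟫ / (2 * ⟪μ, c⟫) * ⟪μ, c⟫ = ⟪w, w⟫ / 2 := by
        field_simp
      rw [h4] at h3
      linarith
  have hμeq : μ = r • c := by
    have := hw ▸ hw0
    exact sub_eq_zero.mp this
  refine ⟨r, ?_, hμeq⟩
  have hneg : ⟪c, -c⟫ < 0 := by rw [inner_neg_right]; linarith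
  have := hv (-c) hneg
  rw [inner_neg_right] at this
  have hμc : 0 ≤ ⟪μ, c⟫ := by linarith
  rw [hr]
  exact div_nonneg (by rw [real_inner_comm]; exact hμc) hc2.le

/-- Key lemma: if there is a "shift vector" `t` witnessing that the cones `Q j`
cannot be simultaneously reached by a common translate, then there are dual
vectors, not all zero, summing to zero. -/
theorem exists_dual_of_no_common {E : Type*} [NormedAddCommGroup E]
    [InnerProductSpace ℝ E] [FiniteDimensional ℝ E] {m : ℕ} (a : E)
    (Q : Fin m → Set E) (hQ : ∀ j, IsConvexCone a (Q j)) (t : Fin m → E)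
    (ht : ¬ ∃ x : E, ∀ j, a + (t j + x) ∈ Q j) :
    ∃ μ : Fin m → E, (∀ j, μ j ∈ polarCone a (Q j)) ∧ (∃ j, μ j ≠ 0) ∧
      ∑ j, μ j = 0 := by
  classical
  set S : Set (Fin m → E) :=
    {y | ∃ (q : Fin m → E) (x : E), (∀ j, q j ∈ Q j) ∧ ∀ j, y j = q j - a - x}
    with hSdef
  have h0 : (0 : Fin m → E) ∈ S :=
    ⟨fun _ => a, 0, fun j => (hQ j).1, fun j => by simp⟩
  have hconv : Convex ℝ S := by
    rintro y₁ ⟨q₁, x₁, hq₁, hy₁⟩ y₂ ⟨q₂, x₂, hq₂, hy₂⟩ α β hα hβ hαβ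
    refine ⟨fun j => α • q₁ j + β • q₂ j, α • x₁ + β • x₂,
      fun j => (hQ j).2.2 (hq₁ j) (hq₂ j) hα hβ hαβ, fun j => ?_⟩
    have hβ' : β = 1 - α := by linarith
    simp only [Pi.add_apply, Pi.smul_apply, hy₁ j, hy₂ j, hβ']
    module
  have hcone : ∀ y ∈ S, ∀ α : ℝ, 0 ≤ α → α • y ∈ S := by
    rintro y ⟨q, x, hq, hy⟩ α hα
    refine ⟨fun j => a + α • (q j - a), α • x,
      fun j => (hQ j).2.1 (q j) (hq j) α hα, fun j => ?_⟩
    simp only [Pi.smul_apply, hy j]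
    module
  by_cases hclo : closure S = Set.univ
  · exfalso
    have hspan : affineSpan ℝ S = ⊤ := by
      have h1 : IsClosed ((affineSpan ℝ S : Set (Fin m → E))) :=
        (affineSpan ℝ S).closed_of_finiteDimensional
      have h2 : closure S ⊆ (affineSpan ℝ S : Set (Fin m → E)) :=
        h1.closure_subset_iff.mpr (subset_affineSpan ℝ S)
      rw [hclo] at h2
      exact eq_top_iff.mpr fun p _ => h2 (Set.mem_univ p)
    obtain ⟨x₀, hx₀⟩ := hconv.interior_nonempty_iff_affineSpan_eq_top.mpr hspan
    have hSuniv : ∀ p : Fin m → E, p ∈ S := by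
      intro p
      have hy : ((2:ℝ) • p - x₀) ∈ closure S := by rw [hclo]; trivial
      have hmem := hconv.combo_interior_closure_mem_interior hx₀ hy
        (by norm_num : (0:ℝ) < 1/2) (by norm_num : (0:ℝ) ≤ 1/2) (by norm_num)
      have hp : (1/2 : ℝ) • x₀ + (1/2 : ℝ) • ((2:ℝ) • p - x₀) = p := by
        rw [smul_sub, smul_smul, show (1/2 : ℝ) * 2 = 1 by norm_num, one_smul]
        abel
      rw [hp] at hmem
      exact interior_subset hmem
    obtain ⟨q, x, hq, hy⟩ := hSuniv t
    refine ht ⟨x, fun j => ?_⟩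
    have : a + (t j + x) = q j := by rw [hy j]; abel
    rw [this]
    exact hq j
  · obtain ⟨p, hp⟩ : ∃ p, p ∉ closure S := by
      by_contra h
      push_neg at h
      exact hclo (Set.eq_univ_of_forall h)
    obtain ⟨f, u, hfu, hup⟩ :=
      geometric_hahn_banach_closed_point hconv.closure isClosed_closure hp
    have hu0 : (0:ℝ) < u := by
      have := hfu 0 (subset_closure h0)
      simpa using this
    have hfS : ∀ y ∈ S, f y ≤ 0 := by
      intro y hy
      by_contra h
      push_neg at h
      have h1 : (u / f y) • y ∈ S := hcone y hy _ (div_nonneg hu0.le h.le)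
      have h2 := hfu _ (subset_closure h1)
      rw [map_smul, smul_eq_mul, div_mul_cancel₀ _ (ne_of_gt h)] at h2
      exact lt_irrefl u h2
    set μ : Fin m → E := fun j =>
      (InnerProductSpace.toDual ℝ E).symm
        (f.comp (LinearMap.toContinuousLinearMap
          (LinearMap.single ℝ (fun _ : Fin m => E) j))) with hμdef
    have hμ : ∀ (j : Fin m) (v : E), ⟪μ j, v⟫ = f (Pi.single j v) := by
      intro j v
      rw [hμdef]
      rw [InnerProductSpace.toDual_symm_apply]
      simp [LinearMap.coe_single]
    have hfy : ∀ y : Fin m → E, f y = ∑ j, ⟪μ j, y j⟫ := by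
      intro y
      conv_lhs => rw [← Finset.univ_sum_single y, map_sum]
      simp_rw [hμ]
    refine ⟨μ, ?_, ?_, ?_⟩
    · intro j z hz
      have hyS : (Pi.single j (z - a) : Fin m → E) ∈ S := by
        refine ⟨Function.update (fun _ => a) j z, 0, fun k => ?_, fun k => ?_⟩
        · rcases eq_or_ne k j with rfl | hk
          · simpa using hz
          · simpa [Function.update_apply, hk] using (hQ k).1
        · rcases eq_or_ne k j with rfl | hk
          · simp
          · simp [Function.update_apply, hk, Pi.single_eq_of_ne hk]
      have := hfS _ hyS
      rwa [← hμ] at this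
    · by_contra h
      push_neg at h
      have hfp : f p = 0 := by
        rw [hfy]
        simp [h]
      rw [hfp] at hup
      linarith
    · have hkey : ∀ x : E, (0:ℝ) ≤ ⟪∑ j, μ j, x⟫ := by
        intro x
        have hyS : (fun _ : Fin m => -x) ∈ S :=
          ⟨fun _ => a, x, fun j => (hQ j).1, fun j => by simp⟩
        have h1 := hfS _ hyS
        rw [hfy] at h1
        simp only [inner_neg_right] at h1
        rw [Finset.sum_neg_distrib] at h1
        rw [sum_inner]
        linarith
      have := hkey (-(∑ j, μ j))
      rw [inner_neg_right] at this
      exact real_inner_self_nonpos.mp (by linarith)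

/-- A family of convex cones `K₀, …, K_s` with a common vertex `a` is
separable if and only if there exist vectors `λᵢ ∈ Kᵢ°`, not all zero,
summing to zero. -/
theorem stmt12 (d s : ℕ) (a : Euc d) (K : Fin (s + 1) → Set (Euc d))
    (hK : ∀ i, IsConvexCone a (K i)) :
    SeparableFam a K ↔
      ∃ lam : Fin (s + 1) → Euc d, (∀ i, lam i ∈ polarCone a (K i)) ∧
        (∃ i, lam i ≠ 0) ∧ ∑ i, lam i = 0 := by
  classical
  constructor
  · rintro ⟨i, c, hc0, hci, hcM⟩
    set H : Set (Euc d) := insert a {x | ⟪c, x - a⟫ < 0} with hH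
    set Q : Fin (s + 1) → Set (Euc d) := fun j => if j = i then H else K j
      with hQdef
    have hQ : ∀ j, IsConvexCone a (Q j) := by
      intro j
      rw [hQdef]
      dsimp only
      split
      · exact halfspace_cone a c
      · exact hK j
    have hc2 : (0:ℝ) < ⟪c, c⟫ := by
      rcases eq_or_lt_of_le (real_inner_self_nonneg (x := c)) with h | h
      · exact absurd ((inner_self_eq_zero (𝕜 := ℝ)).mp h.symm) hc0
      · exact h
    have ht : ¬ ∃ x : Euc d,
        ∀ j, a + ((if j = i then c else 0) + x) ∈ Q j := by
      rintro ⟨x, hx⟩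
      have hxi := hx i
      rw [if_pos rfl, hQdef] at hxi
      simp only [if_pos rfl] at hxi
      have hxj : ∀ j, j ≠ i → a + x ∈ K j := by
        intro j hj
        have := hx j
        rw [if_neg hj, hQdef] at this
        simp only [if_neg hj] at this
        simpa using this
      have h0le := hcM (a + x) hxj
      simp only [add_sub_cancel_left] at h0le
      rw [hH] at hxi
      rcases hxi with heq | hlt
      · have hcx : c + x = 0 := by
          have h := heq
          rwa [add_eq_left] at h
        have hx' : x = -c := eq_neg_of_add_eq_zero_right hcx
        rw [hx', inner_neg_right] at h0le
        linarith
      · simp only [Set.mem_setOf_eq, add_sub_cancel_left, inner_add_right] at hlt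
        linarith
    obtain ⟨μ, hμpol, hμne, hμsum⟩ :=
      exists_dual_of_no_common a Q hQ (fun j => if j = i then c else 0) ht
    refine ⟨μ, ?_, hμne, hμsum⟩
    intro j
    rcases eq_or_ne j i with rfl | hj
    · have hpolH := hμpol j
      rw [hQdef] at hpolH
      simp only [if_pos rfl] at hpolH
      rw [hH] at hpolH
      obtain ⟨r, hr0, hrc⟩ := polar_halfspace a c hc0 (μ j) hpolH
      intro x hx
      rw [hrc, real_inner_smul_left]
      exact mul_nonpos_of_nonneg_of_nonpos hr0 (hci x hx)
    · have := hμpol j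
      rw [hQdef] at this
      simpa only [if_neg hj] using this
  · rintro ⟨lam, hpol, ⟨i₀, hi₀⟩, hsum⟩
    refine ⟨i₀, lam i₀, hi₀, hpol i₀, ?_⟩
    intro x hx
    have h0 : ∑ j, ⟪lam j, x - a⟫ = 0 := by
      rw [← sum_inner, hsum, inner_zero_left]
    rw [← Finset.add_sum_erase _ _ (Finset.mem_univ i₀)] at h0
    have hle : ∑ j ∈ Finset.univ.erase i₀, ⟪lam j, x - a⟫ ≤ 0 :=
      Finset.sum_nonpos fun j hj => hpol j x (hx j (Finset.ne_of_mem_erase hj))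
    linarith
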